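/- For any random variable Z with finite second moment, var[Z] = 2∫_{−∞}^{∞} ( E[(Z−t)₊] − (E[Z]−t)₊ ) dt. -/

import Mathlib

open MeasureTheory ProbabilityTheory Set

noncomputable def Gfun (m z t : ℝ) : ℝ :=
  max (z - t) 0 - max (m - t) 0 - (z - m) * (Iio m).indicator 1 t

lemma Gfun_eq_left {m z : ℝ} (h : m ≤ z) (t : ℝ) :
    Gfun m z t = (Ico m z).indicator (fun t => z - t) t := by
  unfold Gfun
  simp only [indicator_apply, mem_Iio, mem_Ico, Pi.one_apply]
  rcases lt_or_ge t m with h1 | h1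
  · rw [if_pos h1, if_neg (by rintro ⟨h2, _⟩; linarith),
      max_eq_left (by linarith : (0:ℝ) ≤ z - t), max_eq_left (by linarith : (0:ℝ) ≤ m - t)]
    ring
  · rw [if_neg (by intro h2; linarith), max_eq_right (by linarith : m - t ≤ 0)]
    rcases lt_or_ge t z with h2 | h2
    · rw [if_pos ⟨h1, h2⟩, max_eq_left (by linarith : (0:ℝ) ≤ z - t)]
      ring
    · rw [if_neg (by rintro ⟨_, h3⟩; linarith), max_eq_right (by linarith : z - t ≤ 0)]
      ring

lemma Gfun_eq_right {m z : ℝ} (h : z ≤ m) (t : ℝ) :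
    Gfun m z t = (Ico z m).indicator (fun t => t - z) t := by
  unfold Gfun
  simp only [indicator_apply, mem_Iio, mem_Ico, Pi.one_apply]
  rcases lt_or_ge t z with h1 | h1
  · rw [if_pos (by linarith : t < m), if_neg (by rintro ⟨h2, _⟩; linarith),
      max_eq_left (by linarith : (0:ℝ) ≤ z - t), max_eq_left (by linarith : (0:ℝ) ≤ m - t)]
    ring
  · rw [max_eq_right (by linarith : z - t ≤ 0)]
    rcases lt_or_ge t m with h2 | h2
    · rw [if_pos h2, if_pos ⟨h1, h2⟩, max_eq_left (by linarith : (0:ℝ) ≤ m - t)]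
      ring
    · rw [if_neg (by intro h3; linarith), if_neg (by rintro ⟨_, h3⟩; linarith),
        max_eq_right (by linarith : m - t ≤ 0)]
      ring

lemma Gfun_nonneg (m z t : ℝ) : 0 ≤ Gfun m z t := by
  rcases le_total m z with h | h
  · rw [Gfun_eq_left h]
    refine indicator_nonneg (fun x hx => ?_) t
    simp only [mem_Ico] at hx; linarith [hx.2]
  · rw [Gfun_eq_right h]
    refine indicator_nonneg (fun x hx => ?_) t
    simp only [mem_Ico] at hx; linarith [hx.1]

lemma ico_integrable {a b : ℝ} {f : ℝ → ℝ} (hf : Continuous f) :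
    Integrable ((Ico a b).indicator f) := by
  rw [integrable_indicator_iff measurableSet_Ico]
  rcases le_or_gt a b with h | h
  · exact (integrableOn_Icc_iff_integrableOn_Ico).mp
      ((intervalIntegrable_iff_integrableOn_Icc_of_le h).mp (hf.intervalIntegrable a b))
  · rw [Ico_eq_empty (not_lt.mpr h.le)]
    exact integrableOn_empty

lemma Gfun_integrable (m z : ℝ) : Integrable (Gfun m z) := by
  rcases le_total m z with h | h
  · rw [funext (Gfun_eq_left h)]
    exact ico_integrable (by continuity)
  · rw [funext (Gfun_eq_right h)]
    exact ico_integrable (by continuity)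

lemma Gfun_integral (m z : ℝ) : ∫ t, Gfun m z t = (z - m) ^ 2 / 2 := by
  rcases le_total m z with h | h
  · rw [funext (Gfun_eq_left h), integral_indicator measurableSet_Ico,
      integral_Ico_eq_integral_Ioo, ← integral_Ioc_eq_integral_Ioo,
      ← intervalIntegral.integral_of_le h,
      intervalIntegral.integral_sub intervalIntegrable_const
        intervalIntegral.intervalIntegrable_id,
      intervalIntegral.integral_const, integral_id]
    simp; ring
  · rw [funext (Gfun_eq_right h), integral_indicator measurableSet_Ico,
      integral_Ico_eq_integral_Ioo, ← integral_Ioc_eq_integral_Ioo,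
      ← intervalIntegral.integral_of_le h,
      intervalIntegral.integral_sub intervalIntegral.intervalIntegrable_id
        intervalIntegrable_const,
      intervalIntegral.integral_const, integral_id]
    simp; ring

theorem stmt2 {Ω : Type*} [MeasurableSpace Ω] (μ : Measure Ω) [IsProbabilityMeasure μ]
    (Z : Ω → ℝ) (hZmeas : Measurable Z) (hZ2 : MemLp Z 2 μ) :
    variance Z μ =
      2 * ∫ t : ℝ, ((∫ ω, max (Z ω - t) 0 ∂μ) - max ((∫ ω, Z ω ∂μ) - t) 0) := by
  set m := ∫ ω, Z ω ∂μ with hm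
  have hZ1 : Integrable Z μ := hZ2.integrable one_le_two
  have hZm : Integrable (fun ω => Z ω - m) μ := hZ1.sub (integrable_const m)
  have hZm0 : ∫ ω, (Z ω - m) ∂μ = 0 := by
    rw [integral_sub hZ1 (integrable_const m), integral_const, probReal_univ,
      one_smul, ← hm, sub_self]
  have hsq : Integrable (fun ω => (Z ω - m) ^ 2) μ := by
    have := (hZ2.sub (memLp_const m)).integrable_sq
    simpa using this
  have hmeas : Measurable (fun p : Ω × ℝ => Gfun m (Z p.1) p.2) := by
    unfold Gfun
    exact ((((hZmeas.comp measurable_fst).sub measurable_snd).max measurable_const).sub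
      ((measurable_const.sub measurable_snd).max measurable_const)).sub
      (((hZmeas.comp measurable_fst).sub measurable_const).mul
        (((measurable_one (α := ℝ) (β := ℝ)).indicator measurableSet_Iio).comp measurable_snd))
  have hprod : Integrable (fun p : Ω × ℝ => Gfun m (Z p.1) p.2)
      (μ.prod (volume : Measure ℝ)) := by
    rw [integrable_prod_iff hmeas.aestronglyMeasurable]
    constructor
    · exact ae_of_all _ fun ω => Gfun_integrable m (Z ω)
    · have : (fun ω => ∫ t, ‖Gfun m (Z ω) t‖) = fun ω => (Z ω - m) ^ 2 / 2 := by
        funext ω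
        simp_rw [Real.norm_eq_abs, abs_of_nonneg (Gfun_nonneg m (Z ω) _)]
        exact Gfun_integral m (Z ω)
      rw [this]
      exact hsq.div_const 2
  have hswap : ∫ ω, (∫ t, Gfun m (Z ω) t) ∂μ = ∫ t, (∫ ω, Gfun m (Z ω) t ∂μ) :=
    integral_integral_swap hprod
  have inner : ∀ t : ℝ, ∫ ω, Gfun m (Z ω) t ∂μ
      = (∫ ω, max (Z ω - t) 0 ∂μ) - max (m - t) 0 := by
    intro t
    unfold Gfun
    have i1 : Integrable (fun ω => max (Z ω - t) 0) μ := (hZ1.sub (integrable_const t)).pos_part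
    have i2 : Integrable (fun _ : Ω => max (m - t) 0) μ := integrable_const _
    have i12 : Integrable (fun ω => max (Z ω - t) 0 - max (m - t) 0) μ := i1.sub i2
    have i3 : Integrable (fun ω => (Z ω - m) * (Iio m).indicator 1 t) μ :=
      hZm.mul_const _
    rw [integral_sub i12 i3, integral_sub i1 i2, integral_mul_const, hZm0, zero_mul, sub_zero,
      integral_const, probReal_univ, one_smul]
  calc variance Z μ = ∫ ω, (Z ω - m) ^ 2 ∂μ := by
        rw [variance_eq_integral hZ2.aemeasurable]
    _ = 2 * ∫ ω, (Z ω - m) ^ 2 / 2 ∂μ := by rw [integral_div]; ring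
    _ = 2 * ∫ ω, (∫ t, Gfun m (Z ω) t) ∂μ := by simp_rw [Gfun_integral]
    _ = 2 * ∫ t, (∫ ω, Gfun m (Z ω) t ∂μ) := by rw [hswap]
    _ = _ := by rw [funext inner]
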